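/- Let X be an n×p real matrix, y ∈ ℝⁿ, λ > 0. Define J_λ(β, γ) = ‖Xβ − y‖² + λ‖β − γ‖². Let N be any norm on ℝᵖ, η_γ > 0, and D_γ = {γ ∈ ℝᵖ : N(γ) ≤ η_γ}. Then for every γ ∈ ℝᵖ with N(γ) ≥ η_γ and every β₀ ∈ ℝᵖ minimizing β ↦ J_λ(β, γ): inf over β ∈ ℝᵖ of sup over γ' ∈ D_γ of J_λ(β, γ') ≥ (η_γ/N(γ))·J_λ(β₀, γ) − λη_γ(N(γ) − η_γ)·‖γ‖²/N(γ)². -/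

import Mathlib

open scoped BigOperators

/-- The objective `J_λ(β, γ) = ‖Xβ − y‖² + λ‖β − γ‖²`. -/
noncomputable def Jobj (n p : ℕ) (X : Matrix (Fin n) (Fin p) ℝ) (y : Fin n → ℝ)
    (lam : ℝ) (β γ : Fin p → ℝ) : ℝ :=
  (∑ i, (X.mulVec β i - y i) ^ 2) + lam * ∑ j, (β j - γ j) ^ 2

private lemma norm_sum_le_aux {p : ℕ} (N : (Fin p → ℝ) → ℝ)
    (hN0 : N 0 = 0) (hN_add : ∀ x z : Fin p → ℝ, N (x + z) ≤ N x + N z)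
    (s : Finset (Fin p)) (f : Fin p → (Fin p → ℝ)) :
    N (∑ j ∈ s, f j) ≤ ∑ j ∈ s, N (f j) := by
  classical
  induction s using Finset.induction_on with
  | empty => simp [hN0]
  | @insert a s h ih =>
    rw [Finset.sum_insert h, Finset.sum_insert h]
    exact le_trans (hN_add _ _) (by linarith)

/-- For any norm `N`, `η_γ > 0`, any `γ` with `N(γ) ≥ η_γ` and any
minimizer `β₀` of `β ↦ J_λ(β, γ)`:
`inf_β sup_{γ' ∈ D_γ} J_λ(β, γ') ≥ (η_γ/N(γ)) J_λ(β₀, γ) − λη_γ(N(γ) − η_γ)‖γ‖²/N(γ)²`. -/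
theorem optimality_gap_bound (n p : ℕ) (X : Matrix (Fin n) (Fin p) ℝ)
    (y : Fin n → ℝ) (lam : ℝ) (hlam : 0 < lam)
    (N : (Fin p → ℝ) → ℝ)
    (hN_nonneg : ∀ x, 0 ≤ N x)
    (hN_eq_zero : ∀ x, N x = 0 ↔ x = 0)
    (hN_smul : ∀ (c : ℝ) (x : Fin p → ℝ), N (c • x) = |c| * N x)
    (hN_add : ∀ x z : Fin p → ℝ, N (x + z) ≤ N x + N z)
    (ηγ : ℝ) (hηγ : 0 < ηγ)
    (γ : Fin p → ℝ) (hγ : ηγ ≤ N γ)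
    (β₀ : Fin p → ℝ) (hβ₀ : ∀ β, Jobj n p X y lam β₀ γ ≤ Jobj n p X y lam β γ) :
    (⨅ β : Fin p → ℝ,
        sSup {r : ℝ | ∃ γ' : Fin p → ℝ, N γ' ≤ ηγ ∧ r = Jobj n p X y lam β γ'}) ≥
      (ηγ / N γ) * Jobj n p X y lam β₀ γ
        - lam * ηγ * (N γ - ηγ) * (∑ j, γ j ^ 2) / (N γ) ^ 2 := by
  classical
  have hNγ : 0 < N γ := lt_of_lt_of_le hηγ hγ
  have hN0 : N 0 = 0 := (hN_eq_zero 0).mpr rfl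
  rcases Nat.eq_zero_or_pos p with hp | hp
  · exfalso
    haveI : IsEmpty (Fin p) := by rw [hp]; infer_instance
    have hγ0 : γ = 0 := funext fun i => isEmptyElim i
    rw [hγ0, hN0] at hNγ
    exact lt_irrefl 0 hNγ
  -- upper bound N x ≤ M * ‖x‖
  set M : ℝ := ∑ j, N (Pi.single j 1) with hM
  have hMx : ∀ x : Fin p → ℝ, N x ≤ M * ‖x‖ := by
    intro x
    have hx : x = ∑ j, (x j) • (Pi.single j (1:ℝ) : Fin p → ℝ) := by
      funext k
      rw [Finset.sum_apply]
      simp [Pi.single_apply]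
    calc N x = N (∑ j, (x j) • (Pi.single j (1:ℝ) : Fin p → ℝ)) := by rw [← hx]
      _ ≤ ∑ j, N ((x j) • (Pi.single j (1:ℝ) : Fin p → ℝ)) := norm_sum_le_aux N hN0 hN_add _ _
      _ = ∑ j, |x j| * N (Pi.single j (1:ℝ) : Fin p → ℝ) := by simp [hN_smul]
      _ ≤ ∑ j, ‖x‖ * N (Pi.single j (1:ℝ) : Fin p → ℝ) := Finset.sum_le_sum (fun j _ =>
            mul_le_mul_of_nonneg_right (by simpa using norm_le_pi_norm x j) (hN_nonneg _))
      _ = M * ‖x‖ := by rw [← Finset.mul_sum, mul_comm]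
  -- continuity of N
  have hNcont : Continuous N := by
    have habs : ∀ x y : Fin p → ℝ, |N x - N y| ≤ M * ‖x - y‖ := by
      intro x y
      have h1 : N x ≤ N y + N (x - y) := by
        have := hN_add y (x - y); simpa using this
      have h2 : N y ≤ N x + N (y - x) := by
        have := hN_add x (y - x); simpa using this
      have h3 : N (x - y) ≤ M * ‖x - y‖ := hMx _
      have h4 : N (y - x) ≤ M * ‖x - y‖ := by
        have := hMx (y - x); rwa [norm_sub_rev] at this
      rw [abs_sub_le_iff]; constructor <;> linarith
    refine LipschitzWith.continuous (K := ⟨max M 0, le_max_right _ _⟩) ?_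
    refine LipschitzWith.of_dist_le_mul ?_
    intro x y
    rw [Real.dist_eq, dist_eq_norm]
    calc |N x - N y| ≤ M * ‖x - y‖ := habs x y
      _ ≤ max M 0 * ‖x - y‖ := by
          exact mul_le_mul_of_nonneg_right (le_max_left _ _) (norm_nonneg _)
  -- minimum of N on the unit sphere
  have hsph : (Metric.sphere (0 : Fin p → ℝ) 1).Nonempty := by
    haveI : Nontrivial (Fin p → ℝ) := by
      refine ⟨0, Pi.single ⟨0, hp⟩ 1, fun h => ?_⟩
      have := congrFun h ⟨0, hp⟩
      simp at this
    exact NormedSpace.sphere_nonempty.mpr zero_le_one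
  obtain ⟨x₀, hx₀mem, hx₀min⟩ :=
    (isCompact_sphere (0 : Fin p → ℝ) 1).exists_isMinOn hsph hNcont.continuousOn
  have hx₀norm : ‖x₀‖ = 1 := by simpa using hx₀mem
  set c := N x₀ with hc
  have hcpos : 0 < c := by
    rcases (hN_nonneg x₀).lt_or_eq with h | h
    · exact h
    · exfalso
      have hx0 : x₀ = 0 := (hN_eq_zero x₀).mp h.symm
      rw [hx0] at hx₀norm
      simp at hx₀norm
  have hlow : ∀ x : Fin p → ℝ, c * ‖x‖ ≤ N x := by
    intro x
    rcases eq_or_ne x 0 with rfl | hx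
    · simp [hN0]
    · have hxn : ‖x‖ ≠ 0 := norm_ne_zero_iff.mpr hx
      have hpos : (0:ℝ) < ‖x‖ := norm_pos_iff.mpr hx
      have hmem : ‖x‖⁻¹ • x ∈ Metric.sphere (0 : Fin p → ℝ) 1 := by
        simp [norm_smul, abs_inv, abs_norm, inv_mul_cancel₀ hxn]
      have hmin := isMinOn_iff.mp hx₀min _ hmem
      rw [hN_smul, abs_inv, abs_norm] at hmin
      calc c * ‖x‖ ≤ (‖x‖⁻¹ * N x) * ‖x‖ := by
            exact mul_le_mul_of_nonneg_right hmin (norm_nonneg _)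
        _ = N x := by field_simp
  -- boundedness of the sup sets
  have hbdd : ∀ β : Fin p → ℝ,
      BddAbove {r : ℝ | ∃ γ' : Fin p → ℝ, N γ' ≤ ηγ ∧ r = Jobj n p X y lam β γ'} := by
    intro β
    refine ⟨(∑ i, (X.mulVec β i - y i) ^ 2) + lam * ∑ j, (|β j| + ηγ / c) ^ 2, ?_⟩
    rintro r ⟨γ', hγ', rfl⟩
    have hγn : ‖γ'‖ ≤ ηγ / c := by
      rw [le_div_iff₀ hcpos]
      nlinarith [hlow γ']
    have hpt : ∀ j, (β j - γ' j) ^ 2 ≤ (|β j| + ηγ / c) ^ 2 := by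
      intro j
      have h1 : |γ' j| ≤ ηγ / c := le_trans (by simpa using norm_le_pi_norm γ' j) hγn
      nlinarith [le_abs_self (β j), neg_abs_le (β j), le_abs_self (γ' j),
        neg_abs_le (γ' j), abs_nonneg (β j), abs_nonneg (γ' j)]
    have hsum := Finset.sum_le_sum (fun j (_ : j ∈ Finset.univ) => hpt j)
    unfold Jobj
    exact add_le_add_right (mul_le_mul_of_nonneg_left hsum hlam.le) _
  -- main bound
  rw [ge_iff_le]
  apply le_ciInf
  intro β
  set t : ℝ := ηγ / N γ with hts
  have hne : N γ ≠ 0 := ne_of_gt hNγ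
  have ht0 : 0 < t := div_pos hηγ hNγ
  have ht1 : t ≤ 1 := (div_le_one hNγ).mpr hγ
  have htN : N (t • γ) ≤ ηγ := by
    rw [hN_smul, abs_of_pos ht0, hts, div_mul_cancel₀ _ hne]
  have hmem : Jobj n p X y lam β (t • γ) ∈
      {r : ℝ | ∃ γ' : Fin p → ℝ, N γ' ≤ ηγ ∧ r = Jobj n p X y lam β γ'} :=
    ⟨t • γ, htN, rfl⟩
  refine le_trans ?_ (le_csSup (hbdd β) hmem)
  have hA : 0 ≤ ∑ i, (X.mulVec β i - y i) ^ 2 := Finset.sum_nonneg fun i _ => sq_nonneg _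
  have hS2 : 0 ≤ ∑ j, (β j) ^ 2 := Finset.sum_nonneg fun j _ => sq_nonneg _
  have hG : 0 ≤ ∑ j, (γ j) ^ 2 := Finset.sum_nonneg fun j _ => sq_nonneg _
  have hsum : ∑ j, (β j - (t • γ) j) ^ 2
      = t * (∑ j, (β j - γ j) ^ 2) + (1 - t) * (∑ j, (β j) ^ 2)
        - t * (1 - t) * (∑ j, (γ j) ^ 2) := by
    simp only [Pi.smul_apply, smul_eq_mul, Finset.mul_sum]
    rw [← Finset.sum_add_distrib, ← Finset.sum_sub_distrib]
    exact Finset.sum_congr rfl fun j _ => by ring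
  have hstep : t * Jobj n p X y lam β₀ γ - lam * t * (1 - t) * (∑ j, (γ j) ^ 2)
      ≤ Jobj n p X y lam β (t • γ) := by
    have h1 := hβ₀ β
    unfold Jobj at h1 ⊢
    rw [hsum]
    nlinarith [mul_le_mul_of_nonneg_left h1 ht0.le,
      mul_nonneg (sub_nonneg.mpr ht1) hA,
      mul_nonneg (mul_nonneg hlam.le (sub_nonneg.mpr ht1)) hS2]
  refine le_trans ?_ hstep
  have heq : lam * t * (1 - t) * (∑ j, (γ j) ^ 2)
      = lam * ηγ * (N γ - ηγ) * (∑ j, γ j ^ 2) / (N γ) ^ 2 := by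
    rw [hts]
    field_simp
  rw [← heq]
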